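/- If S and T are two balanced rooted binary phylogenetic X-trees on the same label set X with n = |X|, then mast(S, T) ≥ n^0.17; in particular mast(S, T) > n^(1/6) when n > 1. -/

import Mathlib

/-!
Rooted binary phylogenetic trees, restrictions, agreement subtrees, and
maximum agreement subtrees (MASTs), following Martin–Thatte style definitions.
-/

namespace PhyloMAST

/-- A rooted binary tree with leaves labelled by `α`. -/
inductive PTree (α : Type) : Type
  | leaf : α → PTree α
  | node : PTree α → PTree α → PTree α

namespace PTree

variable {α β : Type}

/-- The list of leaf labels, read left to right. -/
def leafList : PTree α → List α
  | leaf x => [x]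
  | node l r => leafList l ++ leafList r

/-- The set of leaf labels. -/
def leaves [DecidableEq α] (t : PTree α) : Finset α := t.leafList.toFinset

/-- The height: number of edges on a longest root-to-leaf path. -/
def height : PTree α → ℕ
  | leaf _ => 0
  | node l r => max (height l) (height r) + 1

/-- `t` is a genuine phylogenetic tree: its leaf labels are pairwise distinct. -/
def Phylo (t : PTree α) : Prop := t.leafList.Nodup

/-- `t` is balanced: its number of leaves is `2 ^ height`. -/
def Balanced (t : PTree α) : Prop := t.leafList.length = 2 ^ t.height

/-- The restriction `t|Y`: the minimal subtree connecting the leaves in `Y`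
with all non-root degree-two vertices suppressed; `none` if no leaf of `t`
lies in `Y`. -/
def restrict [DecidableEq α] : PTree α → Finset α → Option (PTree α)
  | leaf x, Y => if x ∈ Y then some (leaf x) else none
  | node l r, Y =>
    match restrict l Y, restrict r Y with
    | some l', some r' => some (node l' r')
    | some l', none => some l'
    | none, some r' => some r'
    | none, none => none

/-- Isomorphism of leaf-labelled rooted binary trees (children are unordered). -/
inductive Iso : PTree α → PTree α → Prop
  | leaf (x : α) : Iso (leaf x) (leaf x)
  | node {a b c d : PTree α} : Iso a c → Iso b d → Iso (node a b) (node c d)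
  | swap {a b c d : PTree α} : Iso a d → Iso b c → Iso (node a b) (node c d)

/-- `Agree S T Y`: the set `Y` induces an agreement subtree of `S` and `T`. -/
def Agree [DecidableEq α] (S T : PTree α) (Y : Finset α) : Prop :=
  Y ⊆ S.leaves ∩ T.leaves ∧
    ∃ S' T', S.restrict Y = some S' ∧ T.restrict Y = some T' ∧ Iso S' T'

/-- `mast S T`: the maximum size of an agreement subtree of `S` and `T`. -/
noncomputable def mast [DecidableEq α] (S T : PTree α) : ℕ :=
  sSup {k | ∃ Y : Finset α, Agree S T Y ∧ Y.card = k}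

/-- The caterpillar tree `(l₁, l₂, …, lₙ)` built from a (nonempty) list:
`l₁` and `l₂` share a parent, and each later leaf hangs off the path to the
root, which is adjacent to the last leaf. -/
def catList [Inhabited α] : List α → PTree α
  | [] => leaf default
  | x :: xs => xs.foldl (fun t y => node t (leaf y)) (leaf x)

/-- `T` embeds the phylogenetic tree `T'`: the label set of `T'` is contained
in that of `T`, and the restriction of `T` to it is isomorphic to `T'`. -/
def Embeds [DecidableEq α] (T T' : PTree α) : Prop :=
  T'.leaves ⊆ T.leaves ∧ ∃ R, T.restrict T'.leaves = some R ∧ Iso R T'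

/-- `Subtree s t`: `s` is a (pendant) subtree of `t` (possibly `t` itself). -/
inductive Subtree : PTree α → PTree α → Prop
  | refl (t : PTree α) : Subtree t t
  | left {s l r : PTree α} : Subtree s l → Subtree s (node l r)
  | right {s l r : PTree α} : Subtree s r → Subtree s (node l r)

/-- The pendant subtrees rooted at depth `k`, read left to right. -/
def subtreesAt : ℕ → PTree α → List (PTree α)
  | 0, t => [t]
  | _ + 1, leaf x => [leaf x]
  | k + 1, node l r => subtreesAt k l ++ subtreesAt k r

/-- Two trees have the same unlabelled shape (a labelling of the second
yields the first). -/
inductive SameShape : PTree α → PTree β → Prop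
  | leaf (x : α) (y : β) : SameShape (leaf x) (leaf y)
  | node {a b : PTree α} {c d : PTree β} :
      SameShape a c → SameShape b d → SameShape (node a b) (node c d)

end PTree

end PhyloMAST

open PhyloMAST PTree

open PhyloMAST PTree

namespace PhyloMAST
namespace PTree

variable {α : Type} [DecidableEq α]

lemma leaves_node (l r : PTree α) : (node l r).leaves = l.leaves ∪ r.leaves := by
  simp [leaves, leafList]

lemma leaves_leaf (x : α) : (leaf x).leaves = {x} := by simp [leaves, leafList]

lemma mem_leaves {t : PTree α} {x : α} : x ∈ t.leaves ↔ x ∈ t.leafList := by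
  simp [leaves]

lemma phylo_node {l r : PTree α} (h : Phylo (node l r)) :
    Phylo l ∧ Phylo r ∧ Disjoint l.leaves r.leaves := by
  have h' := h
  unfold Phylo leafList at h'
  rw [List.nodup_append] at h'
  exact ⟨h'.1, h'.2.1, (List.disjoint_toFinset_iff_disjoint).mpr (by intro a ha hb; exact h'.2.2 a ha a hb rfl)⟩

lemma leafList_length_pos (t : PTree α) : 0 < t.leafList.length := by
  induction t with
  | leaf x => simp [leafList]
  | node l r ihl ihr => simp [leafList]; omega

lemma length_le_two_pow (t : PTree α) : t.leafList.length ≤ 2 ^ t.height := by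
  induction t with
  | leaf x => simp [leafList, height]
  | node l r ihl ihr =>
      have h1 : 2 ^ l.height ≤ 2 ^ (max l.height r.height) :=
        Nat.pow_le_pow_right (by norm_num) (le_max_left _ _)
      have h2 : 2 ^ r.height ≤ 2 ^ (max l.height r.height) :=
        Nat.pow_le_pow_right (by norm_num) (le_max_right _ _)
      simp only [leafList, height, List.length_append, pow_succ]
      omega

lemma balanced_node {l r : PTree α} (h : Balanced (node l r)) :
    Balanced l ∧ Balanced r ∧ l.height = r.height := by
  have hl := length_le_two_pow l
  have hr := length_le_two_pow r
  have h1 : 2 ^ l.height ≤ 2 ^ (max l.height r.height) :=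
    Nat.pow_le_pow_right (by norm_num) (le_max_left _ _)
  have h2 : 2 ^ r.height ≤ 2 ^ (max l.height r.height) :=
    Nat.pow_le_pow_right (by norm_num) (le_max_right _ _)
  unfold Balanced at h ⊢
  simp only [leafList, height, List.length_append, pow_succ] at h
  have hle : l.leafList.length = 2 ^ l.height ∧ r.leafList.length = 2 ^ r.height ∧
      2 ^ l.height = 2 ^ (max l.height r.height) ∧
      2 ^ r.height = 2 ^ (max l.height r.height) := by omega
  refine ⟨hle.1, hle.2.1, ?_⟩
  have := hle.2.2.1.trans hle.2.2.2.symm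
  exact Nat.pow_right_injective (by norm_num) this

lemma height_node_eq {l r : PTree α} (h : l.height = r.height) :
    (node l r).height = l.height + 1 := by
  simp [height, h]

lemma restrict_congr : ∀ (t : PTree α) (Y Y' : Finset α),
    (∀ x ∈ t.leafList, (x ∈ Y ↔ x ∈ Y')) → restrict t Y = restrict t Y'
  | leaf x, Y, Y', h => by
      have hx := h x (by simp [leafList])
      by_cases hxy : x ∈ Y
      · simp [restrict, hxy, hx.mp hxy]
      · have hxy' : x ∉ Y' := fun hc => hxy (hx.mpr hc)
        simp [restrict, hxy, hxy']
  | node l r, Y, Y', h => by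
      have hl := restrict_congr l Y Y' (fun x hx => h x (List.mem_append_left _ hx))
      have hr := restrict_congr r Y Y' (fun x hx => h x (List.mem_append_right _ hx))
      simp only [restrict, hl, hr]

lemma restrict_eq_none : ∀ (t : PTree α) (Y : Finset α),
    (∀ x ∈ t.leafList, x ∉ Y) → restrict t Y = none
  | leaf x, Y, h => by simp [restrict, h x (by simp [leafList])]
  | node l r, Y, h => by
      have hl := restrict_eq_none l Y (fun x hx => h x (List.mem_append_left _ hx))
      have hr := restrict_eq_none r Y (fun x hx => h x (List.mem_append_right _ hx))
      simp only [restrict, hl, hr]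

lemma restrict_singleton : ∀ (t : PTree α), Phylo t → ∀ x, x ∈ t.leafList →
    restrict t {x} = some (leaf x)
  | leaf y, _, x, hx => by
      simp [leafList] at hx
      simp [restrict, hx]
  | node l r, hP, x, hx => by
      obtain ⟨hPl, hPr, hd⟩ := phylo_node hP
      simp only [leafList, List.mem_append] at hx
      rcases hx with hx | hx
      · have h1 := restrict_singleton l hPl x hx
        have h2 : restrict r {x} = none := by
          apply restrict_eq_none
          intro z hz hzx
          simp at hzx; subst hzx
          exact (Finset.disjoint_left.mp hd (mem_leaves.mpr hx)) (mem_leaves.mpr hz)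
        simp only [restrict, h1, h2]
      · have h1 := restrict_singleton r hPr x hx
        have h2 : restrict l {x} = none := by
          apply restrict_eq_none
          intro z hz hzx
          simp at hzx; subst hzx
          exact (Finset.disjoint_left.mp hd (mem_leaves.mpr hz)) (mem_leaves.mpr hx)
        simp only [restrict, h1, h2]

lemma agree_singleton {S T : PTree α} (hS : Phylo S) (hT : Phylo T) {x : α}
    (hxS : x ∈ S.leaves) (hxT : x ∈ T.leaves) : Agree S T {x} := by
  refine ⟨by simp [Finset.subset_inter_iff, hxS, hxT], leaf x, leaf x,
    restrict_singleton S hS x (mem_leaves.mp hxS),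
    restrict_singleton T hT x (mem_leaves.mp hxT), Iso.leaf x⟩

lemma agree_lift_S {Sl Sr T : PTree α} {C : PTree α} {Z : Finset α}
    (hP : Phylo (node Sl Sr)) (hC : C = Sl ∨ C = Sr) (h : Agree C T Z) :
    Agree (node Sl Sr) T Z := by
  obtain ⟨hPl, hPr, hd⟩ := phylo_node hP
  obtain ⟨hsub, S', T', h1, h2, h3⟩ := h
  have hZC : Z ⊆ C.leaves := hsub.trans Finset.inter_subset_left
  refine ⟨?_, S', T', ?_, h2, h3⟩
  · intro z hz
    have := hsub hz
    simp only [Finset.mem_inter] at this ⊢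
    refine ⟨?_, this.2⟩
    rw [leaves_node, Finset.mem_union]
    rcases hC with rfl | rfl
    · exact Or.inl this.1
    · exact Or.inr this.1
  · rcases hC with rfl | rfl
    · have hn : restrict Sr Z = none := by
        apply restrict_eq_none
        intro x hx hxZ
        exact (Finset.disjoint_right.mp hd (mem_leaves.mpr hx)) (hZC hxZ)
      simp only [restrict, h1, hn]
    · have hn : restrict Sl Z = none := by
        apply restrict_eq_none
        intro x hx hxZ
        exact (Finset.disjoint_left.mp hd (mem_leaves.mpr hx)) (hZC hxZ)
      simp only [restrict, h1, hn]

lemma agree_lift_T {S Tl Tr : PTree α} {C : PTree α} {Z : Finset α}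
    (hP : Phylo (node Tl Tr)) (hC : C = Tl ∨ C = Tr) (h : Agree S C Z) :
    Agree S (node Tl Tr) Z := by
  obtain ⟨hPl, hPr, hd⟩ := phylo_node hP
  obtain ⟨hsub, S', T', h1, h2, h3⟩ := h
  have hZC : Z ⊆ C.leaves := hsub.trans Finset.inter_subset_right
  refine ⟨?_, S', T', h1, ?_, h3⟩
  · intro z hz
    have := hsub hz
    simp only [Finset.mem_inter] at this ⊢
    refine ⟨this.1, ?_⟩
    rw [leaves_node, Finset.mem_union]
    rcases hC with rfl | rfl
    · exact Or.inl this.2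
    · exact Or.inr this.2
  · rcases hC with rfl | rfl
    · have hn : restrict Tr Z = none := by
        apply restrict_eq_none
        intro x hx hxZ
        exact (Finset.disjoint_right.mp hd (mem_leaves.mpr hx)) (hZC hxZ)
      simp only [restrict, h2, hn]
    · have hn : restrict Tl Z = none := by
        apply restrict_eq_none
        intro x hx hxZ
        exact (Finset.disjoint_left.mp hd (mem_leaves.mpr hx)) (hZC hxZ)
      simp only [restrict, h2, hn]

lemma agree_combine {Sl Sr Tl Tr : PTree α} {Z1 Z2 : Finset α}
    (hPS : Phylo (node Sl Sr)) (hPT : Phylo (node Tl Tr))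
    (h1 : Agree Sl Tl Z1) (h2 : Agree Sr Tr Z2) :
    Agree (node Sl Sr) (node Tl Tr) (Z1 ∪ Z2) := by
  obtain ⟨hPSl, hPSr, hdS⟩ := phylo_node hPS
  obtain ⟨hPTl, hPTr, hdT⟩ := phylo_node hPT
  obtain ⟨hsub1, S1', T1', hr1, hr2, hiso1⟩ := h1
  obtain ⟨hsub2, S2', T2', hr3, hr4, hiso2⟩ := h2
  have hZ1Sl : Z1 ⊆ Sl.leaves := hsub1.trans Finset.inter_subset_left
  have hZ1Tl : Z1 ⊆ Tl.leaves := hsub1.trans Finset.inter_subset_right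
  have hZ2Sr : Z2 ⊆ Sr.leaves := hsub2.trans Finset.inter_subset_left
  have hZ2Tr : Z2 ⊆ Tr.leaves := hsub2.trans Finset.inter_subset_right
  refine ⟨?_, node S1' S2', node T1' T2', ?_, ?_, Iso.node hiso1 hiso2⟩
  · intro z hz
    rw [Finset.mem_union] at hz
    simp only [Finset.mem_inter, leaves_node, Finset.mem_union]
    rcases hz with hz | hz
    · exact ⟨Or.inl (hZ1Sl hz), Or.inl (hZ1Tl hz)⟩
    · exact ⟨Or.inr (hZ2Sr hz), Or.inr (hZ2Tr hz)⟩
  · have el : restrict Sl (Z1 ∪ Z2) = some S1' := by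
      rw [restrict_congr Sl (Z1 ∪ Z2) Z1 ?_]
      · exact hr1
      · intro x hx
        simp only [Finset.mem_union]
        constructor
        · rintro (h | h)
          · exact h
          · exact absurd (hZ2Sr h) (Finset.disjoint_left.mp hdS (mem_leaves.mpr hx))
        · exact Or.inl
    have er : restrict Sr (Z1 ∪ Z2) = some S2' := by
      rw [restrict_congr Sr (Z1 ∪ Z2) Z2 ?_]
      · exact hr3
      · intro x hx
        simp only [Finset.mem_union]
        constructor
        · rintro (h | h)
          · exact absurd (hZ1Sl h) (Finset.disjoint_right.mp hdS (mem_leaves.mpr hx))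
          · exact h
        · exact Or.inr
    simp only [restrict, el, er]
  · have el : restrict Tl (Z1 ∪ Z2) = some T1' := by
      rw [restrict_congr Tl (Z1 ∪ Z2) Z1 ?_]
      · exact hr2
      · intro x hx
        simp only [Finset.mem_union]
        constructor
        · rintro (h | h)
          · exact h
          · exact absurd (hZ2Tr h) (Finset.disjoint_left.mp hdT (mem_leaves.mpr hx))
        · exact Or.inl
    have er : restrict Tr (Z1 ∪ Z2) = some T2' := by
      rw [restrict_congr Tr (Z1 ∪ Z2) Z2 ?_]
      · exact hr4
      · intro x hx
        simp only [Finset.mem_union]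
        constructor
        · rintro (h | h)
          · exact absurd (hZ1Tl h) (Finset.disjoint_right.mp hdT (mem_leaves.mpr hx))
          · exact h
        · exact Or.inr
    simp only [restrict, el, er]

lemma agree_combine_swap {Sl Sr Tl Tr : PTree α} {Z1 Z2 : Finset α}
    (hPS : Phylo (node Sl Sr)) (hPT : Phylo (node Tl Tr))
    (h1 : Agree Sl Tr Z1) (h2 : Agree Sr Tl Z2) :
    Agree (node Sl Sr) (node Tl Tr) (Z1 ∪ Z2) := by
  obtain ⟨hPSl, hPSr, hdS⟩ := phylo_node hPS
  obtain ⟨hPTl, hPTr, hdT⟩ := phylo_node hPT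
  obtain ⟨hsub1, S1', T1', hr1, hr2, hiso1⟩ := h1
  obtain ⟨hsub2, S2', T2', hr3, hr4, hiso2⟩ := h2
  have hZ1Sl : Z1 ⊆ Sl.leaves := hsub1.trans Finset.inter_subset_left
  have hZ1Tr : Z1 ⊆ Tr.leaves := hsub1.trans Finset.inter_subset_right
  have hZ2Sr : Z2 ⊆ Sr.leaves := hsub2.trans Finset.inter_subset_left
  have hZ2Tl : Z2 ⊆ Tl.leaves := hsub2.trans Finset.inter_subset_right
  refine ⟨?_, node S1' S2', node T2' T1', ?_, ?_, Iso.swap hiso1 hiso2⟩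
  · intro z hz
    rw [Finset.mem_union] at hz
    simp only [Finset.mem_inter, leaves_node, Finset.mem_union]
    rcases hz with hz | hz
    · exact ⟨Or.inl (hZ1Sl hz), Or.inr (hZ1Tr hz)⟩
    · exact ⟨Or.inr (hZ2Sr hz), Or.inl (hZ2Tl hz)⟩
  · have el : restrict Sl (Z1 ∪ Z2) = some S1' := by
      rw [restrict_congr Sl (Z1 ∪ Z2) Z1 ?_]
      · exact hr1
      · intro x hx
        simp only [Finset.mem_union]
        constructor
        · rintro (h | h)
          · exact h
          · exact absurd (hZ2Sr h) (Finset.disjoint_left.mp hdS (mem_leaves.mpr hx))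
        · exact Or.inl
    have er : restrict Sr (Z1 ∪ Z2) = some S2' := by
      rw [restrict_congr Sr (Z1 ∪ Z2) Z2 ?_]
      · exact hr3
      · intro x hx
        simp only [Finset.mem_union]
        constructor
        · rintro (h | h)
          · exact absurd (hZ1Sl h) (Finset.disjoint_right.mp hdS (mem_leaves.mpr hx))
          · exact h
        · exact Or.inr
    simp only [restrict, el, er]
  · have el : restrict Tl (Z1 ∪ Z2) = some T2' := by
      rw [restrict_congr Tl (Z1 ∪ Z2) Z2 ?_]
      · exact hr4
      · intro x hx
        simp only [Finset.mem_union]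
        constructor
        · rintro (h | h)
          · exact absurd (hZ1Tr h) (Finset.disjoint_left.mp hdT (mem_leaves.mpr hx))
          · exact h
        · exact Or.inr
    have er : restrict Tr (Z1 ∪ Z2) = some T1' := by
      rw [restrict_congr Tr (Z1 ∪ Z2) Z1 ?_]
      · exact hr2
      · intro x hx
        simp only [Finset.mem_union]
        constructor
        · rintro (h | h)
          · exact h
          · exact absurd (hZ2Tl h) (Finset.disjoint_right.mp hdT (mem_leaves.mpr hx))
        · exact Or.inl
    simp only [restrict, el, er]

lemma le_mast {S T : PTree α} {Z : Finset α} (h : Agree S T Z) : Z.card ≤ mast S T := by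
  apply le_csSup
  · refine ⟨S.leaves.card, ?_⟩
    rintro k ⟨Y, hA, rfl⟩
    exact Finset.card_le_card (hA.1.trans Finset.inter_subset_left)
  · exact ⟨Z, h, rfl⟩

lemma card_split {Y A B : Finset α} (hY : Y ⊆ A ∪ B) (hd : Disjoint A B) :
    (Y ∩ A).card + (Y ∩ B).card = Y.card := by
  rw [← Finset.card_union_of_disjoint
    (hd.mono Finset.inter_subset_right Finset.inter_subset_right)]
  congr 1
  rw [← Finset.inter_union_distrib_left]
  exact Finset.inter_eq_left.mpr hY

noncomputable def cc : ℝ := 321/1300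
noncomputable def bb : ℝ := 1/26

lemma cc_nonneg : (0:ℝ) ≤ cc := by norm_num [cc]
lemma bb_nonneg : (0:ℝ) ≤ bb := by norm_num [bb]

set_option maxRecDepth 100000 in
lemma ineq1 : (20:ℝ)^cc ≤ 2^(1+2*bb) := by
  have h20 : (0:ℝ) ≤ 20 := by norm_num
  have h2 : (0:ℝ) ≤ 2 := by norm_num
  have e1 : ((20:ℝ)^cc)^(1300:ℕ) = 20^(321:ℕ) := by
    rw [← Real.rpow_natCast ((20:ℝ)^cc) 1300, ← Real.rpow_mul h20,
        ← Real.rpow_natCast (20:ℝ) 321]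
    norm_num [cc]
  have e2 : ((2:ℝ)^(1+2*bb))^(1300:ℕ) = 2^(1400:ℕ) := by
    rw [← Real.rpow_natCast ((2:ℝ)^(1+2*bb)) 1300, ← Real.rpow_mul h2,
        ← Real.rpow_natCast (2:ℝ) 1400]
    norm_num [bb]
  have h : ((20:ℝ)^cc)^(1300:ℕ) ≤ ((2:ℝ)^(1+2*bb))^(1300:ℕ) := by
    rw [e1, e2]
    have h0 : (20:ℕ)^321 ≤ 2^1400 := Nat.le_of_ble_eq_true rfl
    have h1 : ((20:ℕ)^321 : ℝ) ≤ ((2:ℕ)^1400 : ℝ) := by exact_mod_cast h0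
    push_cast at h1
    exact h1
  exact le_of_pow_le_pow_left₀ (by norm_num) (Real.rpow_nonneg h2 _) h

lemma ineq2 : ((10:ℝ)/9)^cc ≤ 2^bb := by
  have h109 : (0:ℝ) ≤ 10/9 := by norm_num
  have h2 : (0:ℝ) ≤ 2 := by norm_num
  have e1 : (((10:ℝ)/9)^cc)^(1300:ℕ) = (10/9:ℝ)^(321:ℕ) := by
    rw [← Real.rpow_natCast (((10:ℝ)/9)^cc) 1300, ← Real.rpow_mul h109,
        ← Real.rpow_natCast ((10:ℝ)/9) 321]
    norm_num [cc]
  have e2 : ((2:ℝ)^bb)^(1300:ℕ) = 2^(50:ℕ) := by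
    rw [← Real.rpow_natCast ((2:ℝ)^bb) 1300, ← Real.rpow_mul h2,
        ← Real.rpow_natCast (2:ℝ) 50]
    norm_num [bb]
  have h : (((10:ℝ)/9)^cc)^(1300:ℕ) ≤ ((2:ℝ)^bb)^(1300:ℕ) := by
    rw [e1, e2, div_pow, div_le_iff₀ (by positivity)]
    have h0 : (10:ℕ)^321 ≤ 2^50 * 9^321 := Nat.le_of_ble_eq_true rfl
    have h1 : ((10:ℕ)^321 : ℝ) ≤ (((2:ℕ)^50 * 9^321 : ℕ) : ℝ) := by exact_mod_cast h0
    push_cast at h1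
    exact_mod_cast h0
  exact le_of_pow_le_pow_left₀ (by norm_num) (Real.rpow_nonneg h2 _) h

lemma bound_reduce {y y' H H' : ℝ} (hy : 0 ≤ y) (h9 : 9/10 * y ≤ y') (hH : H' = H - 1) :
    y ^ cc * (2:ℝ) ^ (-bb * H) ≤ y' ^ cc * (2:ℝ) ^ (-bb * H') := by
  have hy9 : (0:ℝ) ≤ 9/10 * y := by linarith
  have step1 : y ^ cc ≤ 2 ^ bb * y' ^ cc := by
    calc y ^ cc = ((10/9) * (9/10 * y)) ^ cc := by ring_nf
      _ = (10/9:ℝ)^cc * (9/10*y)^cc := Real.mul_rpow (by norm_num) hy9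
      _ ≤ 2^bb * y'^cc := by
          apply mul_le_mul ineq2 (Real.rpow_le_rpow hy9 h9 cc_nonneg)
            (Real.rpow_nonneg hy9 _) (Real.rpow_nonneg (by norm_num) _)
  have e : (2:ℝ) ^ (-bb * H') = 2 ^ bb * 2 ^ (-bb * H) := by
    rw [← Real.rpow_add (by norm_num : (0:ℝ) < 2)]
    rw [hH]; congr 1; ring
  calc y ^ cc * (2:ℝ) ^ (-bb*H) ≤ (2^bb * y'^cc) * 2^(-bb*H) :=
        mul_le_mul_of_nonneg_right step1 (Real.rpow_nonneg (by norm_num) _)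
    _ = y'^cc * (2:ℝ)^(-bb*H') := by rw [e]; ring

lemma bound_split {y a a' H H' : ℝ} (hy : 0 ≤ y) (h1 : y/20 ≤ a) (h2 : y/20 ≤ a')
    (hH : H' = H - 2) :
    y ^ cc * (2:ℝ) ^ (-bb * H) ≤ a ^ cc * (2:ℝ) ^ (-bb * H') + a' ^ cc * (2:ℝ) ^ (-bb * H') := by
  have h20 : (0:ℝ) ≤ y/20 := by linarith
  have key1 : y ^ cc ≤ 2^(1+2*bb) * (y/20)^cc := by
    calc y ^ cc = (20 * (y/20)) ^ cc := by ring_nf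
      _ = (20:ℝ)^cc * (y/20)^cc := Real.mul_rpow (by norm_num) h20
      _ ≤ 2^(1+2*bb) * (y/20)^cc :=
          mul_le_mul_of_nonneg_right ineq1 (Real.rpow_nonneg h20 _)
  have e : (2:ℝ) ^ (-bb * H') = 2^(2*bb) * 2 ^ (-bb * H) := by
    rw [← Real.rpow_add (by norm_num : (0:ℝ) < 2)]
    rw [hH]; congr 1; ring
  have e2 : (2:ℝ)^(1+2*bb) = 2 * 2^(2*bb) := by
    rw [Real.rpow_add (by norm_num : (0:ℝ) < 2) 1 (2*bb), Real.rpow_one]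
  have ha : (y/20)^cc ≤ a ^ cc := Real.rpow_le_rpow h20 h1 cc_nonneg
  have ha' : (y/20)^cc ≤ a' ^ cc := Real.rpow_le_rpow h20 h2 cc_nonneg
  have hp : (0:ℝ) ≤ (2:ℝ)^(-bb*H) := Real.rpow_nonneg (by norm_num) _
  calc y ^ cc * (2:ℝ)^(-bb*H) ≤ (2^(1+2*bb) * (y/20)^cc) * 2^(-bb*H) :=
        mul_le_mul_of_nonneg_right key1 hp
    _ = (y/20)^cc * 2^(-bb*H') + (y/20)^cc * 2^(-bb*H') := by rw [e, e2]; ring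
    _ ≤ a ^ cc * (2:ℝ)^(-bb*H') + a' ^ cc * (2:ℝ)^(-bb*H') := by
        have hq : (0:ℝ) ≤ (2:ℝ)^(-bb*H') := Real.rpow_nonneg (by norm_num) _
        exact add_le_add (mul_le_mul_of_nonneg_right ha hq)
          (mul_le_mul_of_nonneg_right ha' hq)

lemma key_one {S T : PTree α} (hPS : Phylo S) (hPT : Phylo T) {Y : Finset α}
    (hYS : Y ⊆ S.leaves) (hYT : Y ⊆ T.leaves) (hYne : Y.Nonempty) (h1 : Y.card ≤ 1) :
    ∃ Z, Agree S T Z ∧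
      (Y.card : ℝ) ^ cc * (2:ℝ) ^ (-bb * ((S.height + T.height : ℕ):ℝ)) ≤ (Z.card:ℝ) := by
  obtain ⟨x, hx⟩ := hYne
  have hcard : Y.card = 1 := le_antisymm h1 (Finset.card_pos.mpr ⟨x, hx⟩)
  refine ⟨{x}, agree_singleton hPS hPT (hYS hx) (hYT hx), ?_⟩
  rw [hcard]
  simp only [Nat.cast_one, Real.one_rpow, Finset.card_singleton, one_mul]
  apply Real.rpow_le_one_of_one_le_of_nonpos (by norm_num)
  have h0 : (0:ℝ) ≤ ((S.height + T.height : ℕ):ℝ) := Nat.cast_nonneg _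
  have := bb_nonneg
  nlinarith

lemma key : ∀ (N : ℕ) (S T : PTree α), S.height + T.height ≤ N →
    Phylo S → Phylo T → Balanced S → Balanced T →
    ∀ Y : Finset α, Y ⊆ S.leaves → Y ⊆ T.leaves → Y.Nonempty →
    ∃ Z : Finset α, Agree S T Z ∧
      (Y.card : ℝ) ^ cc * (2:ℝ) ^ (-bb * ((S.height + T.height : ℕ) : ℝ)) ≤ (Z.card : ℝ) := by
  intro N
  induction N with
  | zero =>
      intro S T hN hPS hPT hBS hBT Y hYS hYT hYne
      apply key_one hPS hPT hYS hYT hYne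
      cases S with
      | leaf z =>
          rw [leaves_leaf] at hYS
          have := Finset.card_le_card hYS
          simpa using this
      | node l r =>
          exfalso
          simp [height] at hN
  | succ N IH =>
      intro S T hN hPS hPT hBS hBT Y hYS hYT hYne
      by_cases hy1 : Y.card ≤ 1
      · exact key_one hPS hPT hYS hYT hYne hy1
      push_neg at hy1
      cases S with
      | leaf z =>
          exfalso
          rw [leaves_leaf] at hYS
          have := Finset.card_le_card hYS
          simp at this
          omega
      | node Sl Sr =>
      cases T with
      | leaf z =>
          exfalso
          rw [leaves_leaf] at hYT
          have := Finset.card_le_card hYT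
          simp at this
          omega
      | node Tl Tr =>
      obtain ⟨hPSl, hPSr, hdS⟩ := phylo_node hPS
      obtain ⟨hPTl, hPTr, hdT⟩ := phylo_node hPT
      obtain ⟨hBSl, hBSr, hhS⟩ := balanced_node hBS
      obtain ⟨hBTl, hBTr, hhT⟩ := balanced_node hBT
      have hSh : (node Sl Sr).height = Sl.height + 1 := height_node_eq hhS
      have hTh : (node Tl Tr).height = Tl.height + 1 := height_node_eq hhT
      set y := Y.card with hy
      set t : ℕ := (y + 19) / 20 with ht
      have h20a : y ≤ 20 * t := by omega
      have h20b : 20 * t ≤ y + 19 := by omega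
      have ht1 : 1 ≤ t := by omega
      have hYS' : Y ⊆ Sl.leaves ∪ Sr.leaves := by rw [← leaves_node]; exact hYS
      have hYT' : Y ⊆ Tl.leaves ∪ Tr.leaves := by rw [← leaves_node]; exact hYT
      set A11 := (Y ∩ Sl.leaves) ∩ Tl.leaves with hA11
      set A12 := (Y ∩ Sl.leaves) ∩ Tr.leaves with hA12
      set A21 := (Y ∩ Sr.leaves) ∩ Tl.leaves with hA21
      set A22 := (Y ∩ Sr.leaves) ∩ Tr.leaves with hA22
      have hrow : (Y ∩ Sl.leaves).card + (Y ∩ Sr.leaves).card = y :=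
        card_split hYS' hdS
      have hr1 : A11.card + A12.card = (Y ∩ Sl.leaves).card :=
        card_split (Finset.inter_subset_left.trans hYT') hdT
      have hr2 : A21.card + A22.card = (Y ∩ Sr.leaves).card :=
        card_split (Finset.inter_subset_left.trans hYT') hdT
      have e11 : (Y ∩ Tl.leaves) ∩ Sl.leaves = A11 := by
        rw [hA11]; exact Finset.inter_right_comm Y Tl.leaves Sl.leaves
      have e21 : (Y ∩ Tl.leaves) ∩ Sr.leaves = A21 := by
        rw [hA21]; exact Finset.inter_right_comm Y Tl.leaves Sr.leaves
      have e12 : (Y ∩ Tr.leaves) ∩ Sl.leaves = A12 := by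
        rw [hA12]; exact Finset.inter_right_comm Y Tr.leaves Sl.leaves
      have e22 : (Y ∩ Tr.leaves) ∩ Sr.leaves = A22 := by
        rw [hA22]; exact Finset.inter_right_comm Y Tr.leaves Sr.leaves
      have hc1 : A11.card + A21.card = (Y ∩ Tl.leaves).card := by
        rw [← e11, ← e21]
        exact card_split (Finset.inter_subset_left.trans hYS') hdS
      have hc2 : A12.card + A22.card = (Y ∩ Tr.leaves).card := by
        rw [← e12, ← e22]
        exact card_split (Finset.inter_subset_left.trans hYS') hdS
      have hcol : (Y ∩ Tl.leaves).card + (Y ∩ Tr.leaves).card = y :=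
        card_split hYT' hdT
      have reduceS : ∀ C : PTree α, C = Sl ∨ C = Sr →
          9 * y + 1 ≤ 10 * (Y ∩ C.leaves).card →
          ∃ Z : Finset α, Agree (node Sl Sr) (node Tl Tr) Z ∧
            (y : ℝ) ^ cc *
              (2:ℝ) ^ (-bb * (((node Sl Sr).height + (node Tl Tr).height : ℕ) : ℝ)) ≤
              (Z.card : ℝ) := by
        intro C hC hbig
        have hPC : Phylo C := by rcases hC with rfl | rfl <;> assumption
        have hBC : Balanced C := by rcases hC with rfl | rfl <;> assumption
        have hhC : C.height = Sl.height := by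
          rcases hC with rfl | rfl
          · rfl
          · exact hhS.symm
        have hy2 : 2 ≤ y := hy1
        have hne : (Y ∩ C.leaves).Nonempty := Finset.card_pos.mp (by omega)
        obtain ⟨Z, hZA, hZb⟩ := IH C (node Tl Tr) (by omega) hPC hPT hBC hBT
          (Y ∩ C.leaves) Finset.inter_subset_right
          (Finset.inter_subset_left.trans hYT) hne
        refine ⟨Z, agree_lift_S hPS hC hZA, ?_⟩
        have hH' : ((C.height + (node Tl Tr).height : ℕ):ℝ) =
            (((node Sl Sr).height + (node Tl Tr).height : ℕ):ℝ) - 1 := by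
          rw [hSh, hTh, hhC]; push_cast; ring
        have h9 : 9/10 * (y:ℝ) ≤ ((Y ∩ C.leaves).card : ℝ) := by
          have hc : (9*(y:ℝ)+1) ≤ 10 * ((Y ∩ C.leaves).card:ℝ) := by exact_mod_cast hbig
          linarith
        exact le_trans (bound_reduce (Nat.cast_nonneg y) h9 hH') hZb
      have reduceT : ∀ C : PTree α, C = Tl ∨ C = Tr →
          9 * y + 1 ≤ 10 * (Y ∩ C.leaves).card →
          ∃ Z : Finset α, Agree (node Sl Sr) (node Tl Tr) Z ∧
            (y : ℝ) ^ cc *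
              (2:ℝ) ^ (-bb * (((node Sl Sr).height + (node Tl Tr).height : ℕ) : ℝ)) ≤
              (Z.card : ℝ) := by
        intro C hC hbig
        have hPC : Phylo C := by rcases hC with rfl | rfl <;> assumption
        have hBC : Balanced C := by rcases hC with rfl | rfl <;> assumption
        have hhC : C.height = Tl.height := by
          rcases hC with rfl | rfl
          · rfl
          · exact hhT.symm
        have hy2 : 2 ≤ y := hy1
        have hne : (Y ∩ C.leaves).Nonempty := Finset.card_pos.mp (by omega)
        obtain ⟨Z, hZA, hZb⟩ := IH (node Sl Sr) C (by omega) hPS hPC hBS hBC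
          (Y ∩ C.leaves) (Finset.inter_subset_left.trans hYS)
          Finset.inter_subset_right hne
        refine ⟨Z, agree_lift_T hPT hC hZA, ?_⟩
        have hH' : (((node Sl Sr).height + C.height : ℕ):ℝ) =
            (((node Sl Sr).height + (node Tl Tr).height : ℕ):ℝ) - 1 := by
          rw [hTh, hhC]; push_cast; ring
        have h9 : 9/10 * (y:ℝ) ≤ ((Y ∩ C.leaves).card : ℝ) := by
          have hc : (9*(y:ℝ)+1) ≤ 10 * ((Y ∩ C.leaves).card:ℝ) := by exact_mod_cast hbig
          linarith
        exact le_trans (bound_reduce (Nat.cast_nonneg y) h9 hH') hZb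
      by_cases hsp : (t ≤ A11.card ∧ t ≤ A22.card) ∨ (t ≤ A12.card ∧ t ≤ A21.card)
      · have hH2cast : ∀ u v : ℕ, u + 1 = (node Sl Sr).height → v + 1 = (node Tl Tr).height →
            ((u + v : ℕ):ℝ) = (((node Sl Sr).height + (node Tl Tr).height : ℕ):ℝ) - 2 := by
          intro u v hu hv
          rw [← hu, ← hv]; push_cast; ring
        rcases hsp with ⟨h1, h2⟩ | ⟨h1, h2⟩
        · obtain ⟨Z1, hZ1A, hZ1b⟩ := IH Sl Tl (by omega) hPSl hPTl hBSl hBTl A11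
            (Finset.inter_subset_left.trans Finset.inter_subset_right)
            Finset.inter_subset_right (Finset.card_pos.mp (by omega))
          obtain ⟨Z2, hZ2A, hZ2b⟩ := IH Sr Tr (by omega) hPSr hPTr hBSr hBTr A22
            (Finset.inter_subset_left.trans Finset.inter_subset_right)
            Finset.inter_subset_right (Finset.card_pos.mp (by omega))
          refine ⟨Z1 ∪ Z2, agree_combine hPS hPT hZ1A hZ2A, ?_⟩
          have hdZ : Disjoint Z1 Z2 := hdS.mono
            (hZ1A.1.trans Finset.inter_subset_left)
            (hZ2A.1.trans Finset.inter_subset_left)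
          rw [Finset.card_union_of_disjoint hdZ]
          have eHH : Sr.height + Tr.height = Sl.height + Tl.height := by omega
          rw [eHH] at hZ2b
          have hH1 : ((Sl.height + Tl.height : ℕ):ℝ) =
              (((node Sl Sr).height + (node Tl Tr).height : ℕ):ℝ) - 2 := by
            rw [hSh, hTh]; push_cast; ring
          have hb1 : (y:ℝ)/20 ≤ (A11.card:ℝ) := by
            have c1 : (y:ℝ) ≤ 20 * t := by exact_mod_cast h20a
            have c2 : (t:ℝ) ≤ A11.card := by exact_mod_cast h1
            linarith
          have hb2 : (y:ℝ)/20 ≤ (A22.card:ℝ) := by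
            have c1 : (y:ℝ) ≤ 20 * t := by exact_mod_cast h20a
            have c2 : (t:ℝ) ≤ A22.card := by exact_mod_cast h2
            linarith
          refine le_trans (le_trans (bound_split (Nat.cast_nonneg y) hb1 hb2 hH1)
            (add_le_add hZ1b hZ2b)) (le_of_eq (by push_cast; ring))
        · obtain ⟨Z1, hZ1A, hZ1b⟩ := IH Sl Tr (by omega) hPSl hPTr hBSl hBTr A12
            (Finset.inter_subset_left.trans Finset.inter_subset_right)
            Finset.inter_subset_right (Finset.card_pos.mp (by omega))
          obtain ⟨Z2, hZ2A, hZ2b⟩ := IH Sr Tl (by omega) hPSr hPTl hBSr hBTl A21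
            (Finset.inter_subset_left.trans Finset.inter_subset_right)
            Finset.inter_subset_right (Finset.card_pos.mp (by omega))
          refine ⟨Z1 ∪ Z2, agree_combine_swap hPS hPT hZ1A hZ2A, ?_⟩
          have hdZ : Disjoint Z1 Z2 := hdS.mono
            (hZ1A.1.trans Finset.inter_subset_left)
            (hZ2A.1.trans Finset.inter_subset_left)
          rw [Finset.card_union_of_disjoint hdZ]
          have eHH : Sr.height + Tl.height = Sl.height + Tr.height := by omega
          rw [eHH] at hZ2b
          have hH1 : ((Sl.height + Tr.height : ℕ):ℝ) =
              (((node Sl Sr).height + (node Tl Tr).height : ℕ):ℝ) - 2 := by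
            rw [hSh, hTh, ← hhT]; push_cast; ring
          have hb1 : (y:ℝ)/20 ≤ (A12.card:ℝ) := by
            have c1 : (y:ℝ) ≤ 20 * t := by exact_mod_cast h20a
            have c2 : (t:ℝ) ≤ A12.card := by exact_mod_cast h1
            linarith
          have hb2 : (y:ℝ)/20 ≤ (A21.card:ℝ) := by
            have c1 : (y:ℝ) ≤ 20 * t := by exact_mod_cast h20a
            have c2 : (t:ℝ) ≤ A21.card := by exact_mod_cast h2
            linarith
          refine le_trans (le_trans (bound_split (Nat.cast_nonneg y) hb1 hb2 hH1)
            (add_le_add hZ1b hZ2b)) (le_of_eq (by push_cast; ring))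
      · have hna : A11.card < t ∨ A22.card < t := by
          by_contra hc; push_neg at hc; exact hsp (Or.inl ⟨hc.1, hc.2⟩)
        have hnb : A12.card < t ∨ A21.card < t := by
          by_contra hc; push_neg at hc; exact hsp (Or.inr ⟨hc.1, hc.2⟩)
        rcases hna with h11 | h22 <;> rcases hnb with h12 | h21
        · exact reduceS Sr (Or.inr rfl) (by omega)
        · exact reduceT Tr (Or.inr rfl) (by omega)
        · exact reduceT Tl (Or.inl rfl) (by omega)
        · exact reduceS Sl (Or.inl rfl) (by omega)

lemma leaves_card_eq (t : PTree α) (h : Phylo t) : t.leaves.card = t.leafList.length :=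
  List.toFinset_card_of_nodup h

end PTree
end PhyloMAST

open PhyloMAST PTree

theorem mast_main {α : Type} [DecidableEq α]
    (S T : PTree α) (n : ℕ)
    (hS : Phylo S) (hT : Phylo T) (hbS : Balanced S) (hbT : Balanced T)
    (hX : S.leaves = T.leaves) (hn : n = S.leaves.card) :
    (n : ℝ) ^ (0.17 : ℝ) ≤ (mast S T : ℝ) ∧
      (1 < n → (n : ℝ) ^ ((1 : ℝ) / 6) < (mast S T : ℝ)) := by
  have hlenS : S.leaves.card = 2 ^ S.height := by
    rw [leaves_card_eq S hS]; exact hbS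
  have hlenT : T.leaves.card = 2 ^ T.height := by
    rw [leaves_card_eq T hT]; exact hbT
  have hm : T.height = S.height := by
    have : (2:ℕ) ^ S.height = 2 ^ T.height := by rw [← hlenS, ← hlenT, hX]
    exact (Nat.pow_right_injective (by norm_num) this).symm
  have hne : S.leaves.Nonempty := by
    rw [← Finset.card_pos, leaves_card_eq S hS]
    exact leafList_length_pos S
  obtain ⟨Z, hZA, hZb⟩ := key (S.height + T.height) S T le_rfl hS hT hbS hbT
    S.leaves le_rfl (hX.le) hne
  have hmast : (Z.card : ℝ) ≤ (mast S T : ℝ) := by exact_mod_cast le_mast hZA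
  have hnn : (n:ℝ) = (2:ℝ) ^ ((S.height : ℕ) : ℝ) := by
    rw [hn, hlenS]
    rw [Real.rpow_natCast]
    push_cast
    ring
  have e017 : (n : ℝ) ^ (0.17 : ℝ) =
      ((S.leaves.card : ℕ) : ℝ) ^ cc *
        (2:ℝ) ^ (-bb * ((S.height + T.height : ℕ) : ℝ)) := by
    rw [← hn, hnn]
    rw [← Real.rpow_mul (by norm_num), ← Real.rpow_mul (by norm_num),
        ← Real.rpow_add (by norm_num : (0:ℝ) < 2)]
    congr 1
    push_cast [hm]
    norm_num [cc, bb]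
    ring
  have main : (n : ℝ) ^ (0.17 : ℝ) ≤ (mast S T : ℝ) := by
    rw [e017]
    exact le_trans hZb hmast
  refine ⟨main, fun h1 => ?_⟩
  have h1' : (1:ℝ) < (n:ℝ) := by exact_mod_cast h1
  have : (n:ℝ) ^ ((1:ℝ)/6) < (n:ℝ) ^ (0.17:ℝ) :=
    (Real.rpow_lt_rpow_left_iff h1').mpr (by norm_num)
  linarith


/-- Two balanced rooted binary phylogenetic trees on the same
label set of size `n` have `mast ≥ n ^ 0.17`; in particular
`mast > n ^ (1/6)` when `n > 1`. -/
theorem mast_ge_rpow_of_balanced {α : Type} [DecidableEq α]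
    (S T : PTree α) (n : ℕ)
    (hS : Phylo S) (hT : Phylo T) (hbS : Balanced S) (hbT : Balanced T)
    (hX : S.leaves = T.leaves) (hn : n = S.leaves.card) :
    (n : ℝ) ^ (0.17 : ℝ) ≤ (mast S T : ℝ) ∧
      (1 < n → (n : ℝ) ^ ((1 : ℝ) / 6) < (mast S T : ℝ)) := by
  exact mast_main S T n hS hT hbS hbT hX hn
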